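/- The category of coherent topological spaces with quasi-compact continuous maps is equivalent to the opposite of the category of distributive lattices, via the functor sending a coherent space to its lattice of quasi-compact open subsets. -/

import Mathlib

open CategoryTheory TopologicalSpace

/-- A coherent (spectral) topological space: sober, quasi-compact, quasi-separated,
with a basis of quasi-compact open sets. -/
structure CoherentSpaceCat where
  carrier : Type
  [topInst : TopologicalSpace carrier]
  [sober : QuasiSober carrier]
  [t0 : T0Space carrier]
  [cpt : CompactSpace carrier]
  [qsep : QuasiSeparatedSpace carrier]
  basis : ∀ (x : carrier) (U : Set carrier), IsOpen U → x ∈ U →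
    ∃ V, IsOpen V ∧ IsCompact V ∧ x ∈ V ∧ V ⊆ U

attribute [instance] CoherentSpaceCat.topInst CoherentSpaceCat.sober
  CoherentSpaceCat.t0 CoherentSpaceCat.cpt CoherentSpaceCat.qsep

instance : CoeSort CoherentSpaceCat Type := ⟨CoherentSpaceCat.carrier⟩

/-- The category of coherent spaces and quasi-compact (spectral) continuous maps. -/
instance : Category CoherentSpaceCat where
  Hom X Y := {f : X.carrier → Y.carrier // IsSpectralMap f}
  id X := ⟨id, isSpectralMap_id⟩
  comp f g := ⟨g.1 ∘ f.1, g.2.comp f.2⟩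

section Spec
variable {L : Type} [DistribLattice L] [BoundedOrder L]

/-- The spectrum of a bounded distributive lattice: bounded lattice homs to `Prop`. -/
def LatSpec (L : Type) [DistribLattice L] [BoundedOrder L] : Type := BoundedLatticeHom L Prop

namespace LatSpec

noncomputable instance : FunLike (LatSpec L) L Prop := BoundedLatticeHom.instFunLike

instance : BoundedLatticeHomClass (LatSpec L) L Prop :=
  BoundedLatticeHom.instBoundedLatticeHomClass

/-- basic open set -/
def bs (a : L) : Set (LatSpec L) := {f | f a}

instance instTop : TopologicalSpace (LatSpec L) :=
  generateFrom (Set.range (bs : L → Set (LatSpec L)))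

lemma isOpen_bs (a : L) : IsOpen (bs a) := isOpen_generateFrom_of_mem ⟨a, rfl⟩

lemma bs_inf (a b : L) : bs (a ⊓ b) = bs a ∩ bs b := by
  ext f
  simp only [bs, Set.mem_setOf_eq, Set.mem_inter_iff]
  rw [show f (a ⊓ b) = (f a ∧ f b) by rw [map_inf]; simp [inf_Prop_eq]]

lemma bs_sup (a b : L) : bs (a ⊔ b) = bs a ∪ bs b := by
  ext f
  simp only [bs, Set.mem_setOf_eq, Set.mem_union]
  rw [show f (a ⊔ b) = (f a ∨ f b) by rw [map_sup]; simp [sup_Prop_eq]]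

lemma bs_top : bs (⊤ : L) = Set.univ := by
  ext f
  have : f ⊤ = True := by rw [map_top]; rfl
  simp [bs, this]

lemma bs_bot : bs (⊥ : L) = ∅ := by
  ext f
  have : f ⊥ = False := by rw [map_bot]; rfl
  simp [bs, this]

lemma isBasis : IsTopologicalBasis (Set.range (bs : L → Set (LatSpec L))) := by
  refine ⟨?_, ?_, rfl⟩
  · rintro _ ⟨a, rfl⟩ _ ⟨b, rfl⟩ f hf
    exact ⟨bs (a ⊓ b), ⟨a ⊓ b, rfl⟩, by rwa [bs_inf], by rw [bs_inf]⟩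
  · refine Set.eq_univ_of_univ_subset ?_
    intro f _
    exact Set.mem_sUnion.2 ⟨bs ⊤, ⟨⊤, rfl⟩, by rw [bs_top]; trivial⟩

/-- Separation: a hom to `Prop` separating a filter from a disjoint ideal. -/
lemma exists_hom {F : Order.PFilter L} {I : Order.Ideal L}
    (h : Disjoint (F : Set L) (I : Set L)) :
    ∃ f : LatSpec L, (∀ a ∈ F, f a) ∧ (∀ a ∈ I, ¬ f a) := by
  obtain ⟨J, hJp, hIJ, hJF⟩ := DistribLattice.prime_ideal_of_disjoint_filter_ideal h
  have hproper : (⊤ : L) ∉ J := Set.disjoint_left.1 hJF F.top_mem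
  refine ⟨⟨⟨⟨fun a => a ∉ J, ?_⟩, ?_⟩, ?_, ?_⟩, ?_, ?_⟩
  · intro a b
    show (a ⊔ b ∉ J) = ((a ∉ J) ∨ (b ∉ J))
    rw [eq_iff_iff]
    constructor
    · intro hab
      by_contra hc
      push_neg at hc
      exact hab (Order.Ideal.sup_mem hc.1 hc.2)
    · rintro (ha | hb) habJ
      · exact ha (J.lower le_sup_left habJ)
      · exact hb (J.lower le_sup_right habJ)
  · intro a b
    show (a ⊓ b ∉ J) = ((a ∉ J) ∧ (b ∉ J))
    rw [eq_iff_iff]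
    constructor
    · intro hab
      exact ⟨fun ha => hab (J.lower inf_le_left ha), fun hb => hab (J.lower inf_le_right hb)⟩
    · rintro ⟨ha, hb⟩ habJ
      rcases hJp.mem_or_mem habJ with h' | h'
      · exact ha h'
      · exact hb h'
  · show ((⊤ : L) ∉ J) = True
    simp [hproper]
  · show ((⊥ : L) ∉ J) = False
    simp [J.bot_mem]
  · intro a ha
    exact Set.disjoint_left.1 hJF ha
  · intro a ha hfa
    exact hfa (hIJ ha)

lemma exists_hom_of_not_le {a b : L} (h : ¬ a ≤ b) : ∃ f : LatSpec L, f a ∧ ¬ f b := by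
  have hd : Disjoint ((Order.PFilter.principal a : Order.PFilter L) : Set L)
      ((Order.Ideal.principal b : Order.Ideal L) : Set L) := by
    rw [Set.disjoint_left]
    intro x hx hx'
    exact h (le_trans (Order.PFilter.mem_principal.1 hx)
      (Order.Ideal.mem_principal.1 hx'))
  obtain ⟨f, hf, hf'⟩ := exists_hom hd
  exact ⟨f, hf a (Order.PFilter.mem_principal.2 le_rfl),
    hf' b (Order.Ideal.mem_principal.2 le_rfl)⟩

end LatSpec
end Spec

section Spec2
variable {L : Type} [DistribLattice L] [BoundedOrder L]
namespace LatSpec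

lemma bs_finsetSup (T : Finset L) (f : LatSpec L) : f ∈ bs (T.sup id) ↔ ∃ b ∈ T, f ∈ bs b := by
  classical
  induction T using Finset.induction_on with
  | empty => simp [Finset.sup_empty, bs_bot]
  | insert _ _ h ih =>
      rw [Finset.sup_insert]
      show f ∈ bs (_ ⊔ _) ↔ _
      rw [bs_sup]
      simp only [Set.mem_union, ih, Finset.mem_insert]
      constructor
      · rintro (h | ⟨b, hb, hfb⟩)
        · exact ⟨_, Or.inl rfl, h⟩
        · exact ⟨b, Or.inr hb, hfb⟩
      · rintro ⟨b, (rfl | hb), hfb⟩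
        · exact Or.inl hfb
        · exact Or.inr ⟨b, hb, hfb⟩

/-- The ideal generated by a set. -/
def genIdeal (S : Set L) : Order.Ideal L where
  carrier := {x | ∃ T : Finset L, ↑T ⊆ S ∧ x ≤ T.sup id}
  lower' := by
    rintro x y hyx ⟨T, hT, hx⟩
    exact ⟨T, hT, le_trans hyx hx⟩
  nonempty' := ⟨⊥, ∅, by simp⟩
  directed' := by
    classical
    rintro x ⟨T₁, hT₁, hx⟩ y ⟨T₂, hT₂, hy⟩
    refine ⟨x ⊔ y, ⟨T₁ ∪ T₂, by simp [Set.union_subset_iff, hT₁, hT₂], ?_⟩, le_sup_left,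
      le_sup_right⟩
    exact sup_le (le_trans hx (Finset.sup_mono Finset.subset_union_left))
      (le_trans hy (Finset.sup_mono Finset.subset_union_right))

lemma mem_genIdeal {S : Set L} {x : L} :
    x ∈ genIdeal S ↔ ∃ T : Finset L, ↑T ⊆ S ∧ x ≤ T.sup id := Iff.rfl

lemma le_finsetSup_of_bs_subset {a : L} {S : Set L} (h : bs a ⊆ ⋃ b ∈ S, bs b) :
    ∃ T : Finset L, ↑T ⊆ S ∧ a ≤ T.sup id := by
  by_contra hc
  have ha : a ∉ genIdeal S := by
    rw [mem_genIdeal]; push_neg at hc ⊢; exact hc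
  have hd : Disjoint ((Order.PFilter.principal a : Order.PFilter L) : Set L)
      ((genIdeal S : Order.Ideal L) : Set L) := by
    rw [Set.disjoint_left]
    intro x hx hx'
    exact ha ((genIdeal S).lower (Order.PFilter.mem_principal.1 hx) hx')
  obtain ⟨f, hf, hf'⟩ := exists_hom hd
  have hfa : f ∈ bs a := hf a (Order.PFilter.mem_principal.2 le_rfl)
  obtain ⟨b, hb, hfb⟩ := Set.mem_iUnion₂.1 (h hfa)
  exact hf' b (mem_genIdeal.2 ⟨{b}, by simpa using hb, by simp⟩) hfb

lemma isCompact_bs (a : L) : IsCompact (bs a) := by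
  classical
  refine isCompact_of_finite_subcover fun {ι} U hU hcov => ?_
  set S : Set L := {b : L | ∃ i, bs b ⊆ U i} with hS
  have hsub : bs a ⊆ ⋃ b ∈ S, bs b := by
    intro f hf
    obtain ⟨i, hi⟩ := Set.mem_iUnion.1 (hcov hf)
    obtain ⟨_, ⟨b, rfl⟩, hfb, hbU⟩ := isBasis.exists_subset_of_mem_open hi (hU i)
    exact Set.mem_iUnion₂.2 ⟨b, ⟨i, hbU⟩, hfb⟩
  obtain ⟨T, hTS, haT⟩ := le_finsetSup_of_bs_subset hsub
  have hgex : ∀ b : L, b ∈ S → ∃ i, bs b ⊆ U i := fun b hb => hb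
  let g : ∀ b : L, b ∈ S → ι := fun b hb => (hgex b hb).choose
  have hg : ∀ (b : L) (hb : b ∈ S), bs b ⊆ U (g b hb) := fun b hb => (hgex b hb).choose_spec
  refine ⟨T.attach.image fun b => g b.1 (hTS b.2), ?_⟩
  intro f hf
  have : f ∈ bs (T.sup id) := by
    have := OrderHomClass.mono (f : BoundedLatticeHom L Prop) haT
    exact this hf
  obtain ⟨b, hbT, hfb⟩ := (bs_finsetSup T f).1 this
  refine Set.mem_iUnion₂.2 ⟨g b (hTS hbT), ?_, hg b (hTS hbT) hfb⟩
  exact Finset.mem_image.2 ⟨⟨b, hbT⟩, Finset.mem_attach _ _, rfl⟩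

lemma exists_bs_of_compact_open {s : Set (LatSpec L)} (ho : IsOpen s) (hc : IsCompact s) :
    ∃ a : L, s = bs a := by
  classical
  have hcov : s ⊆ ⋃ b ∈ {b : L | bs b ⊆ s}, bs b := by
    intro f hf
    obtain ⟨_, ⟨b, rfl⟩, hfb, hbs⟩ := isBasis.exists_subset_of_mem_open hf ho
    exact Set.mem_iUnion₂.2 ⟨b, hbs, hfb⟩
  have hcov' : s ⊆ ⋃ b : {b : L | bs b ⊆ s}, bs b.1 := by
    intro f hf
    obtain ⟨b, hb, hfb⟩ := Set.mem_iUnion₂.1 (hcov hf)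
    exact Set.mem_iUnion.2 ⟨⟨b, hb⟩, hfb⟩
  obtain ⟨T, hT⟩ := hc.elim_finite_subcover (fun b : {b : L | bs b ⊆ s} => bs b.1)
    (fun b => isOpen_bs b.1) hcov'
  refine ⟨(T.image fun b => b.1).sup id, subset_antisymm ?_ ?_⟩
  · intro f hf
    obtain ⟨b, hbT, hfb⟩ := Set.mem_iUnion₂.1 (hT hf)
    exact (bs_finsetSup _ f).2 ⟨b.1, Finset.mem_image.2 ⟨b, hbT, rfl⟩, hfb⟩
  · intro f hf
    obtain ⟨b, hbT, hfb⟩ := (bs_finsetSup _ f).1 hf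
    obtain ⟨c, _, rfl⟩ := Finset.mem_image.1 hbT
    exact c.2 hfb

lemma bs_subset_iff {a b : L} : bs a ⊆ bs b ↔ a ≤ b := by
  constructor
  · intro h
    by_contra hab
    obtain ⟨f, hfa, hfb⟩ := exists_hom_of_not_le hab
    exact hfb (h hfa)
  · intro h f hf
    exact OrderHomClass.mono (f : BoundedLatticeHom L Prop) h hf

lemma bs_injective : Function.Injective (bs : L → Set (LatSpec L)) := fun a b h =>
  le_antisymm (bs_subset_iff.1 h.le) (bs_subset_iff.1 h.ge)

instance : T0Space (LatSpec L) := by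
  refine ⟨fun {f g} h => ?_⟩
  have : ∀ a : L, f a ↔ g a := by
    intro a
    have := (inseparable_iff_forall_isOpen.1 h) (bs a) (isOpen_bs a)
    exact this
  apply DFunLike.ext
  intro a
  exact propext (this a)

instance : CompactSpace (LatSpec L) :=
  ⟨by rw [← bs_top]; exact isCompact_bs ⊤⟩

instance : QuasiSeparatedSpace (LatSpec L) := by
  refine ⟨fun U V hUo hUc hVo hVc => ?_⟩
  obtain ⟨a, rfl⟩ := exists_bs_of_compact_open hUo hUc
  obtain ⟨b, rfl⟩ := exists_bs_of_compact_open hVo hVc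
  rw [← bs_inf]
  exact isCompact_bs _

instance : QuasiSober (LatSpec L) := by
  refine ⟨fun {S} hirr hcl => ?_⟩
  have hsup : ∀ a b : L, ((S ∩ bs (a ⊔ b)).Nonempty : Prop) =
      ((S ∩ bs a).Nonempty ⊔ (S ∩ bs b).Nonempty) := by
    intro a b
    rw [eq_iff_iff, bs_sup, Set.inter_union_distrib_left, Set.union_nonempty]
    simp [sup_Prop_eq]
  have hinf : ∀ a b : L, ((S ∩ bs (a ⊓ b)).Nonempty : Prop) =
      ((S ∩ bs a).Nonempty ⊓ (S ∩ bs b).Nonempty) := by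
    intro a b
    rw [eq_iff_iff, bs_inf]
    simp only [inf_Prop_eq]
    constructor
    · rintro ⟨f, hfS, hfa, hfb⟩
      exact ⟨⟨f, hfS, hfa⟩, ⟨f, hfS, hfb⟩⟩
    · rintro ⟨h₁, h₂⟩
      exact hirr.2 (bs a) (bs b) (isOpen_bs a) (isOpen_bs b) h₁ h₂
  have htop : ((S ∩ bs (⊤ : L)).Nonempty : Prop) = (⊤ : Prop) := by
    show _ = True
    simp [bs_top, hirr.1]
  have hbot : ((S ∩ bs (⊥ : L)).Nonempty : Prop) = (⊥ : Prop) := by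
    show _ = False
    simp [bs_bot]
  refine ⟨(⟨⟨⟨fun a => (S ∩ bs a).Nonempty, hsup⟩, hinf⟩, htop, hbot⟩ : LatSpec L), ?_⟩
  set g : LatSpec L := ⟨⟨⟨fun a => (S ∩ bs a).Nonempty, hsup⟩, hinf⟩, htop, hbot⟩
  have hgbs : ∀ a : L, g ∈ bs a ↔ (S ∩ bs a).Nonempty := fun a => Iff.rfl
  have hgS : g ∈ S := by
    by_contra hgs
    obtain ⟨_, ⟨a, rfl⟩, hga, hbsub⟩ :=
      isBasis.exists_subset_of_mem_open (show g ∈ Sᶜ from hgs) hcl.isOpen_compl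
    obtain ⟨f, hfS, hfa⟩ := (hgbs a).1 hga
    exact hbsub hfa hfS
  refine subset_antisymm (closure_minimal (Set.singleton_subset_iff.2 hgS) hcl) ?_
  intro h hh
  rw [mem_closure_iff]
  intro o ho hho
  obtain ⟨_, ⟨a, rfl⟩, hha, hasub⟩ := isBasis.exists_subset_of_mem_open hho ho
  exact ⟨g, hasub ((hgbs a).2 ⟨h, hh, hha⟩), rfl⟩

lemma coherent_basis (f : LatSpec L) (U : Set (LatSpec L)) (hU : IsOpen U) (hf : f ∈ U) :
    ∃ V, IsOpen V ∧ IsCompact V ∧ f ∈ V ∧ V ⊆ U := by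
  obtain ⟨_, ⟨a, rfl⟩, hfa, hsub⟩ := isBasis.exists_subset_of_mem_open hf hU
  exact ⟨bs a, isOpen_bs a, isCompact_bs a, hfa, hsub⟩

lemma continuous_to_spec {α : Type} [TopologicalSpace α] {g : α → LatSpec L}
    (h : ∀ a : L, IsOpen (g ⁻¹' bs a)) : Continuous g := by
  rw [show (instTop : TopologicalSpace (LatSpec L)) =
    TopologicalSpace.generateFrom (Set.range (bs : L → Set (LatSpec L))) from rfl,
    continuous_generateFrom_iff]
  rintro _ ⟨a, rfl⟩
  exact h a

end LatSpec
end Spec2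

section KO
variable (X : Type) [TopologicalSpace X]

/-- The lattice of compact open subsets. -/
def KO : Type := {U : Opens X // IsCompact (U : Set X)}

namespace KO
variable {X}

instance : Max (KO X) :=
  ⟨fun U V => ⟨U.1 ⊔ V.1, by rw [Opens.coe_sup]; exact U.2.union V.2⟩⟩

instance [QuasiSeparatedSpace X] : Min (KO X) :=
  ⟨fun U V => ⟨U.1 ⊓ V.1, by
    rw [Opens.coe_inf]
    exact QuasiSeparatedSpace.inter_isCompact _ _ U.1.2 U.2 V.1.2 V.2⟩⟩

instance : Bot (KO X) := ⟨⟨⊥, by simp⟩⟩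

instance [CompactSpace X] : Top (KO X) := ⟨⟨⊤, by rw [Opens.coe_top]; exact isCompact_univ⟩⟩

lemma val_injective : Function.Injective (fun U : KO X => U.1) := Subtype.val_injective

instance : LE (KO X) := ⟨fun U V => U.1 ≤ V.1⟩

instance : LT (KO X) := ⟨fun U V => U.1 < V.1⟩

instance [QuasiSeparatedSpace X] : DistribLattice (KO X) :=
  Function.Injective.distribLattice (fun U : KO X => U.1) val_injective Iff.rfl Iff.rfl
    (fun _ _ => rfl) (fun _ _ => rfl)

lemma val_le_iff [QuasiSeparatedSpace X] {U V : KO X} : U ≤ V ↔ U.1 ≤ V.1 := Iff.rfl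

instance [QuasiSeparatedSpace X] : OrderBot (KO X) where
  bot := ⊥
  bot_le U := val_le_iff.2 bot_le

instance [QuasiSeparatedSpace X] [CompactSpace X] : OrderTop (KO X) where
  top := ⊤
  le_top U := val_le_iff.2 le_top

instance [QuasiSeparatedSpace X] [CompactSpace X] : BoundedOrder (KO X) where

lemma le_iff [QuasiSeparatedSpace X] {U V : KO X} : U ≤ V ↔ (U.1 : Set X) ⊆ (V.1 : Set X) := by
  rw [val_le_iff, ← SetLike.coe_subset_coe]

@[simp] lemma coe_sup (U V : KO X) : ((U ⊔ V).1 : Set X) = (U.1 : Set X) ∪ (V.1 : Set X) :=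
  Opens.coe_sup _ _

@[simp] lemma coe_inf [QuasiSeparatedSpace X] (U V : KO X) :
    ((U ⊓ V).1 : Set X) = (U.1 : Set X) ∩ (V.1 : Set X) := Opens.coe_inf _ _

@[simp] lemma coe_top [QuasiSeparatedSpace X] [CompactSpace X] :
    (((⊤ : KO X)).1 : Set X) = Set.univ := Opens.coe_top

@[simp] lemma coe_bot [QuasiSeparatedSpace X] : (((⊥ : KO X)).1 : Set X) = ∅ := Opens.coe_bot

lemma coe_finsetSup [QuasiSeparatedSpace X] (T : Finset (KO X)) :
    ((T.sup id).1 : Set X) = ⋃ U ∈ T, ((U.1 : Opens X) : Set X) := by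
  classical
  induction T using Finset.induction_on with
  | empty => simp [Finset.sup_empty]
  | insert _ _ h ih =>
      rw [Finset.sup_insert, id, coe_sup, ih]
      simp

end KO

/-- The compact-opens map on morphisms: preimage. -/
def KOmap {X Y : Type} [TopologicalSpace X] [TopologicalSpace Y]
    [QuasiSeparatedSpace X] [CompactSpace X] [QuasiSeparatedSpace Y] [CompactSpace Y]
    {f : X → Y} (hf : IsSpectralMap f) : BoundedLatticeHom (KO Y) (KO X) where
  toFun U := ⟨⟨f ⁻¹' U.1, U.1.2.preimage hf.continuous⟩,
    hf.isCompact_preimage_of_isOpen U.1.2 U.2⟩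
  map_sup' U V := by
    apply Subtype.ext
    apply Opens.ext
    show f ⁻¹' ((U ⊔ V).1 : Set Y) = f ⁻¹' (U.1 : Set Y) ∪ f ⁻¹' (V.1 : Set Y)
    show f ⁻¹' ((U ⊔ V).1 : Set Y) = _
    rw [KO.coe_sup, Set.preimage_union]
  map_inf' U V := by
    apply Subtype.ext
    apply Opens.ext
    show f ⁻¹' ((U ⊓ V).1 : Set Y) = f ⁻¹' (U.1 : Set Y) ∩ f ⁻¹' (V.1 : Set Y)
    show f ⁻¹' ((U ⊓ V).1 : Set Y) = _
    rw [KO.coe_inf, Set.preimage_inter]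
  map_top' := by
    apply Subtype.ext
    apply Opens.ext
    conv_rhs => rw [KO.coe_top]
    show f ⁻¹' (((⊤ : KO Y)).1 : Set Y) = _
    rw [KO.coe_top, Set.preimage_univ]
  map_bot' := by
    apply Subtype.ext
    apply Opens.ext
    conv_rhs => rw [KO.coe_bot]
    show f ⁻¹' (((⊥ : KO Y)).1 : Set Y) = _
    rw [KO.coe_bot, Set.preimage_empty]
end KO

section SpecMap
variable {L M : Type} [DistribLattice L] [BoundedOrder L] [DistribLattice M] [BoundedOrder M]

/-- The spectrum map induced by a lattice homomorphism. -/
noncomputable def specMap (φ : BoundedLatticeHom L M) : LatSpec M → LatSpec L := fun f =>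
  (f : BoundedLatticeHom M Prop).comp φ

lemma specMap_preimage_bs (φ : BoundedLatticeHom L M) (a : L) :
    specMap φ ⁻¹' LatSpec.bs a = LatSpec.bs (φ a) := rfl

lemma specMap_spectral (φ : BoundedLatticeHom L M) : IsSpectralMap (specMap φ) := by
  have hcont : Continuous (specMap φ) := LatSpec.continuous_to_spec fun a => by
    rw [specMap_preimage_bs]
    exact LatSpec.isOpen_bs _
  refine ⟨hcont, fun s hso hsc => ?_⟩
  obtain ⟨a, rfl⟩ := LatSpec.exists_bs_of_compact_open hso hsc
  rw [specMap_preimage_bs]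
  exact LatSpec.isCompact_bs _

end SpecMap

section Unit
variable {Z : Type} [TopologicalSpace Z] [QuasiSeparatedSpace Z] [CompactSpace Z]

/-- The canonical (membership) point map into the spectrum of the compact opens. -/
def ptHom (x : Z) : LatSpec (KO Z) :=
  ⟨⟨⟨fun U => x ∈ (U.1 : Set Z), fun U V => by
      rw [eq_iff_iff]
      show x ∈ ((U ⊔ V).1 : Set Z) ↔ (x ∈ (U.1 : Set Z)) ⊔ (x ∈ (V.1 : Set Z))
      rw [KO.coe_sup]
      simp [sup_Prop_eq]⟩, fun U V => by
      rw [eq_iff_iff]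
      show x ∈ ((U ⊓ V).1 : Set Z) ↔ (x ∈ (U.1 : Set Z)) ⊓ (x ∈ (V.1 : Set Z))
      rw [KO.coe_inf]
      simp [inf_Prop_eq]⟩, by
      show (x ∈ (((⊤ : KO Z)).1 : Set Z)) = True
      simp, by
      show (x ∈ (((⊥ : KO Z)).1 : Set Z)) = False
      simp⟩

lemma ptHom_apply (x : Z) (U : KO Z) : ptHom x U ↔ x ∈ (U.1 : Set Z) := Iff.rfl

lemma ptHom_preimage_bs (U : KO Z) :
    (ptHom : Z → LatSpec (KO Z)) ⁻¹' (LatSpec.bs U) = (U.1 : Set Z) := rfl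

lemma ptHom_spectral : IsSpectralMap (ptHom : Z → LatSpec (KO Z)) := by
  have hcont : Continuous (ptHom : Z → LatSpec (KO Z)) := LatSpec.continuous_to_spec fun U => by
    rw [ptHom_preimage_bs]
    exact U.1.2
  refine ⟨hcont, fun s hso hsc => ?_⟩
  obtain ⟨U, rfl⟩ := LatSpec.exists_bs_of_compact_open hso hsc
  rw [ptHom_preimage_bs]
  exact U.2

end Unit

section UnitCoh
variable (X : CoherentSpaceCat)

lemma ptHom_injective : Function.Injective (ptHom : X.carrier → LatSpec (KO X.carrier)) := by
  intro x y h
  have hall : ∀ U : KO X.carrier, x ∈ (U.1 : Set X.carrier) ↔ y ∈ (U.1 : Set X.carrier) :=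
    fun U => iff_of_eq (DFunLike.congr_fun h U)
  have hins : Inseparable x y := by
    rw [inseparable_iff_forall_isOpen]
    intro s hs
    constructor
    · intro hx
      obtain ⟨V, hVo, hVc, hxV, hVs⟩ := X.basis x s hs hx
      exact hVs ((hall ⟨⟨V, hVo⟩, hVc⟩).1 hxV)
    · intro hy
      obtain ⟨V, hVo, hVc, hyV, hVs⟩ := X.basis y s hs hy
      exact hVs ((hall ⟨⟨V, hVo⟩, hVc⟩).2 hyV)
  exact hins.eq

lemma ptHom_surjective : Function.Surjective (ptHom : X.carrier → LatSpec (KO X.carrier)) := by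
  intro f
  classical
  set C : Set X.carrier := {x | ∀ U : KO X.carrier, x ∈ (U.1 : Set X.carrier) → f U} with hC
  have hcompl : Cᶜ = ⋃ U ∈ {U : KO X.carrier | ¬ f U}, (U.1 : Set X.carrier) := by
    ext x
    simp only [hC, Set.mem_compl_iff, Set.mem_setOf_eq, Set.mem_iUnion, exists_prop]
    push_neg
    constructor
    · rintro ⟨U, hxU, hfU⟩
      exact ⟨U, hfU, hxU⟩
    · rintro ⟨U, hfU, hxU⟩
      exact ⟨U, hxU, hfU⟩
  have hclosed : IsClosed C := by
    rw [← isOpen_compl_iff, hcompl]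
    exact isOpen_biUnion fun U _ => U.1.2
  have haux : ∀ V : KO X.carrier, f V → ((V.1 : Set X.carrier) ∩ C).Nonempty := by
    intro V hfV
    by_contra hemp
    rw [Set.not_nonempty_iff_eq_empty] at hemp
    have hsub : (V.1 : Set X.carrier) ⊆ ⋃ U : {U : KO X.carrier // ¬ f U}, (U.1.1 : Set X.carrier) := by
      intro z hz
      have hzc : z ∈ Cᶜ := fun hzC => Set.eq_empty_iff_forall_notMem.1 hemp z ⟨hz, hzC⟩
      rw [hcompl] at hzc
      obtain ⟨U, hfU, hzU⟩ := Set.mem_iUnion₂.1 hzc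
      exact Set.mem_iUnion.2 ⟨⟨U, hfU⟩, hzU⟩
    obtain ⟨T, hT⟩ := V.2.elim_finite_subcover
      (fun U : {U : KO X.carrier // ¬ f U} => (U.1.1 : Set X.carrier))
      (fun U => U.1.1.2) hsub
    have hle : V ≤ (T.image fun U => U.1).sup id := by
      rw [KO.le_iff, KO.coe_finsetSup]
      intro z hz
      obtain ⟨U, hUT, hzU⟩ := Set.mem_iUnion₂.1 (hT hz)
      exact Set.mem_iUnion₂.2 ⟨U.1, Finset.mem_image.2 ⟨U, hUT, rfl⟩, hzU⟩
    have hfsup : f ((T.image fun U => U.1).sup id) :=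
      OrderHomClass.mono (f : BoundedLatticeHom (KO X.carrier) Prop) hle hfV
    obtain ⟨U, hUT, hfU⟩ := (LatSpec.bs_finsetSup _ f).1 hfsup
    obtain ⟨U', _, rfl⟩ := Finset.mem_image.1 hUT
    exact U'.2 hfU
  have hne : C.Nonempty := by
    have htop : f (⊤ : KO X.carrier) := by
      rw [map_top]
      trivial
    obtain ⟨z, _, hzC⟩ := haux ⊤ htop
    exact ⟨z, hzC⟩
  have hpre : IsPreirreducible C := by
    rintro u v hu hv ⟨x₁, hx₁C, hx₁u⟩ ⟨x₂, hx₂C, hx₂v⟩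
    obtain ⟨W₁s, hW₁o, hW₁c, hxW₁, hW₁u⟩ := X.basis x₁ u hu hx₁u
    obtain ⟨W₂s, hW₂o, hW₂c, hxW₂, hW₂v⟩ := X.basis x₂ v hv hx₂v
    set W₁ : KO X.carrier := ⟨⟨W₁s, hW₁o⟩, hW₁c⟩
    set W₂ : KO X.carrier := ⟨⟨W₂s, hW₂o⟩, hW₂c⟩
    have hfW : f (W₁ ⊓ W₂) := by
      rw [map_inf]
      exact ⟨hx₁C W₁ hxW₁, hx₂C W₂ hxW₂⟩
    obtain ⟨z, hzW, hzC⟩ := haux (W₁ ⊓ W₂) hfW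
    rw [KO.coe_inf] at hzW
    exact ⟨z, hzC, hW₁u hzW.1, hW₂v hzW.2⟩
  obtain ⟨x, hx⟩ := QuasiSober.sober ⟨hne, hpre⟩ hclosed
  refine ⟨x, ?_⟩
  apply DFunLike.ext
  intro U
  apply propext
  constructor
  · intro hxU
    exact hx.mem U hxU
  · intro hfU
    obtain ⟨z, hz1, hz2⟩ := haux U hfU
    exact (hx.mem_open_set_iff U.1.2).2 ⟨z, hz2, hz1⟩

lemma ptHom_image_bs (U : KO X.carrier) :
    (ptHom : X.carrier → LatSpec (KO X.carrier)) '' (U.1 : Set X.carrier) = LatSpec.bs U := by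
  apply subset_antisymm
  · rintro _ ⟨x, hx, rfl⟩
    exact hx
  · intro g hg
    obtain ⟨x, rfl⟩ := ptHom_surjective X g
    exact ⟨x, hg, rfl⟩

lemma ptHom_isOpenMap : IsOpenMap (ptHom : X.carrier → LatSpec (KO X.carrier)) := by
  intro u hu
  have himg : (ptHom : X.carrier → LatSpec (KO X.carrier)) '' u =
      ⋃ U ∈ {U : KO X.carrier | (U.1 : Set X.carrier) ⊆ u}, LatSpec.bs U := by
    apply subset_antisymm
    · rintro _ ⟨x, hx, rfl⟩
      obtain ⟨V, hVo, hVc, hxV, hVu⟩ := X.basis x u hu hx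
      exact Set.mem_iUnion₂.2 ⟨⟨⟨V, hVo⟩, hVc⟩, hVu, hxV⟩
    · intro g hg
      obtain ⟨U, hUu, hgU⟩ := Set.mem_iUnion₂.1 hg
      obtain ⟨x, rfl⟩ := ptHom_surjective X g
      exact ⟨x, hUu hgU, rfl⟩
  rw [himg]
  exact isOpen_biUnion fun U _ => LatSpec.isOpen_bs U

/-- The point map as an equivalence. -/
noncomputable def ptEquiv : X.carrier ≃ LatSpec (KO X.carrier) :=
  Equiv.ofBijective _ ⟨ptHom_injective X, ptHom_surjective X⟩

lemma ptEquiv_symm_spectral : IsSpectralMap (ptEquiv X).symm := by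
  have hcont : Continuous (ptEquiv X).symm := by
    refine continuous_def.2 fun u hu => ?_
    rw [← (ptEquiv X).image_eq_preimage_symm u]
    exact ptHom_isOpenMap X u hu
  refine ⟨hcont, fun s hso hsc => ?_⟩
  have : (ptEquiv X).symm ⁻¹' s = (ptHom : X.carrier → LatSpec (KO X.carrier)) '' s :=
    ((ptEquiv X).image_eq_preimage_symm s).symm
  rw [this, show s = ((⟨⟨s, hso⟩, hsc⟩ : KO X.carrier).1 : Set X.carrier) from rfl,
    ]
  erw [ptHom_image_bs]
  exact LatSpec.isCompact_bs _

end UnitCoh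

section Functors

/-- View a `BddDistLat` morphism as a bounded lattice homomorphism. -/
def toBLHom {A B : BddDistLat} (ψ : A ⟶ B) : BoundedLatticeHom A B := ψ.hom

/-- View a bounded lattice homomorphism as a `BddDistLat` morphism. -/
def ofBLHom {A B : BddDistLat} (ψ : BoundedLatticeHom A B) : A ⟶ B := BddDistLat.ofHom ψ

/-- Spectrum of a bounded distributive lattice, as a coherent space. -/
def SpecCoh (L : BddDistLat) : CoherentSpaceCat where
  carrier := LatSpec L
  basis := LatSpec.coherent_basis

/-- The spectrum functor. -/
noncomputable def SpecFunctor : BddDistLatᵒᵖ ⥤ CoherentSpaceCat where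
  obj L := SpecCoh L.unop
  map {L M} φ := ⟨specMap (toBLHom φ.unop), specMap_spectral (toBLHom φ.unop)⟩
  map_id L := by
    apply Subtype.ext
    funext f
    exact BoundedLatticeHom.ext fun a => rfl
  map_comp {L M N} φ ψ := by
    apply Subtype.ext
    funext f
    exact BoundedLatticeHom.ext fun a => rfl

/-- The compact opens functor. -/
def KOfunctor : CoherentSpaceCat ⥤ BddDistLatᵒᵖ where
  obj X := Opposite.op (BddDistLat.of (KO X.carrier))
  map {X Y} f := (ofBLHom (KOmap f.2)).op
  map_id X := by
    apply Quiver.Hom.unop_inj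
    exact BddDistLat.ext fun U => Subtype.ext (Opens.ext rfl)
  map_comp {X Y Z} f g := by
    apply Quiver.Hom.unop_inj
    exact BddDistLat.ext fun U => Subtype.ext (Opens.ext rfl)

/-- The unit isomorphism components. -/
noncomputable def unitApp (X : CoherentSpaceCat) : X ≅ (KOfunctor ⋙ SpecFunctor).obj X where
  hom := ⟨ptHom, ptHom_spectral⟩
  inv := ⟨(ptEquiv X).symm, ptEquiv_symm_spectral X⟩
  hom_inv_id := by
    apply Subtype.ext
    funext x
    exact (ptEquiv X).symm_apply_apply x
  inv_hom_id := by
    apply Subtype.ext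
    funext f
    exact (ptEquiv X).apply_symm_apply f

noncomputable def unitIso : 𝟭 CoherentSpaceCat ≅ KOfunctor ⋙ SpecFunctor :=
  NatIso.ofComponents unitApp (by
    intro X Y f
    apply Subtype.ext
    funext x
    exact BoundedLatticeHom.ext fun U => rfl)

/-- The counit order isomorphism. -/
noncomputable def bsOrderIso (L : Type) [DistribLattice L] [BoundedOrder L] :
    L ≃o KO (LatSpec L) where
  toEquiv := Equiv.ofBijective
    (fun a => (⟨⟨LatSpec.bs a, LatSpec.isOpen_bs a⟩, LatSpec.isCompact_bs a⟩ : KO (LatSpec L)))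
    ⟨fun a b h => LatSpec.bs_injective (congrArg (fun U : KO (LatSpec L) => (U.1 : Set (LatSpec L))) h),
     fun U => by
      obtain ⟨a, ha⟩ := LatSpec.exists_bs_of_compact_open U.1.2 U.2
      exact ⟨a, Subtype.ext (Opens.ext ha.symm)⟩⟩
  map_rel_iff' {a b} := by
    constructor
    · intro h
      exact LatSpec.bs_subset_iff.1 (KO.le_iff.1 h)
    · intro h
      exact KO.le_iff.2 (LatSpec.bs_subset_iff.2 h)

noncomputable def counitApp (L : BddDistLat) : L ≅ BddDistLat.of (KO (LatSpec ↑L)) :=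
  BddDistLat.Iso.mk (α := L) (β := BddDistLat.of (KO (LatSpec ↑L))) (bsOrderIso ↑L)

noncomputable def counitIso : SpecFunctor ⋙ KOfunctor ≅ 𝟭 BddDistLatᵒᵖ :=
  NatIso.ofComponents (fun L => (counitApp L.unop).op) (by
    intro L M φ
    apply Quiver.Hom.unop_inj
    exact BddDistLat.ext fun a => rfl)

/-- Stone duality for coherent spaces. -/
noncomputable def stoneEquiv : CoherentSpaceCat ≌ BddDistLatᵒᵖ :=
  CategoryTheory.Equivalence.mk KOfunctor SpecFunctor unitIso counitIso

end Functors


/-- Stone duality for coherent spaces: the category of coherent spaces with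
quasi-compact continuous maps is equivalent to the opposite of the category of
(bounded) distributive lattices, via the functor sending a coherent space to its
lattice of quasi-compact open subsets. -/
theorem coherentSpaces_equiv_distLat_op :
    ∃ e : CoherentSpaceCat ≌ BddDistLatᵒᵖ,
      ∀ X : CoherentSpaceCat,
        Nonempty (((e.functor.obj X).unop : Type) ≃o
          {U : Opens X.carrier // IsCompact (U : Set X.carrier)}) := by
  exact ⟨stoneEquiv, fun X => ⟨⟨Equiv.refl _, Iff.rfl⟩⟩⟩
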